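/- Let (Ω, 𝓕, ℙ) be a probability space, let S : Ω → Matrix(n,n,ℝ) be a random matrix that is almost surely symmetric and positive definite with entrywise expectation E[S] equal to the identity matrix I, and let v : Ω → ℝⁿ be a random vector with E[v] = v₀. Assume vᵀ·S⁻¹·v and vᵀ·S·v-type expressions appearing below are integrable (in particular E[‖S^{1/2}v₀‖²] and E[‖S^{-1/2}v‖²] are finite). Then E[vᵀ · S⁻¹ · v] ≥ v₀ᵀ v₀. -/

import Mathlib

open Matrix MeasureTheory

/-- Pointwise Cauchy–Schwarz-type bound: for a symmetric positive definite `S`,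
expanding `(v - S v₀)ᵀ S⁻¹ (v - S v₀) ≥ 0` yields
`vᵀ S⁻¹ v ≥ 2 v₀ᵀ v - v₀ᵀ S v₀`. -/
lemma pointwise_inv_quadratic_bound {n : ℕ} {S : Matrix (Fin n) (Fin n) ℝ}
    (hS : S.PosDef) (v v₀ : Fin n → ℝ) :
    2 * (v₀ ⬝ᵥ v) - v₀ ⬝ᵥ (S *ᵥ v₀) ≤ v ⬝ᵥ (S⁻¹ *ᵥ v) := by
  have hdet : IsUnit S.det := isUnit_iff_ne_zero.mpr hS.det_pos.ne'
  have hinv : S⁻¹ *ᵥ (S *ᵥ v₀) = v₀ := by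
    rw [Matrix.mulVec_mulVec, Matrix.nonsing_inv_mul _ hdet, Matrix.one_mulVec]
  have hsym : Sᵀ = S := hS.1
  have hSSinv : S *ᵥ (S⁻¹ *ᵥ v) = v := by
    rw [Matrix.mulVec_mulVec, Matrix.mul_nonsing_inv _ hdet, Matrix.one_mulVec]
  have h0 : 0 ≤ (v - S *ᵥ v₀) ⬝ᵥ (S⁻¹ *ᵥ (v - S *ᵥ v₀)) :=
    by simpa using hS.inv.posSemidef.dotProduct_mulVec_nonneg (v - S *ᵥ v₀)
  have hexp : (v - S *ᵥ v₀) ⬝ᵥ (S⁻¹ *ᵥ (v - S *ᵥ v₀)) =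
      v ⬝ᵥ (S⁻¹ *ᵥ v) - 2 * (v₀ ⬝ᵥ v) + v₀ ⬝ᵥ (S *ᵥ v₀) := by
    have h1 : (S *ᵥ v₀) ⬝ᵥ (S⁻¹ *ᵥ v) = v₀ ⬝ᵥ v := by
      rw [dotProduct_comm, Matrix.dotProduct_mulVec, ← Matrix.mulVec_transpose,
        hsym, hSSinv, dotProduct_comm]
    have h2 : v ⬝ᵥ v₀ = v₀ ⬝ᵥ v := dotProduct_comm _ _
    have h3 : (S *ᵥ v₀) ⬝ᵥ v₀ = v₀ ⬝ᵥ (S *ᵥ v₀) := dotProduct_comm _ _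
    rw [Matrix.mulVec_sub, sub_dotProduct, dotProduct_sub,
      dotProduct_sub, hinv, h1, h2, h3]
    ring
  linarith [h0, hexp.symm.le, hexp.le]

/-- **Lemma 2 (Appendix A) of the paper (inequality part).**
If `S` is an almost surely symmetric positive definite random matrix with `E[S] = I`
and `v` is a random vector with `E[v] = v₀`, then `E[vᵀ S⁻¹ v] ≥ v₀ᵀ v₀`.
The integrability hypotheses correspond to the finiteness of `E[‖S^{1/2} v₀‖²] = E[v₀ᵀ S v₀]`
and `E[‖S^{-1/2} v‖²] = E[vᵀ S⁻¹ v]`. Expectations are taken entrywise. -/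
theorem expected_inverse_quadratic_form_ge
    {Ω : Type*} [MeasurableSpace Ω] (ℙ : Measure Ω) [IsProbabilityMeasure ℙ]
    {n : ℕ} (hn : 0 < n)
    (S : Ω → Matrix (Fin n) (Fin n) ℝ)
    (hSpd : ∀ᵐ ω ∂ℙ, (S ω).PosDef)
    (hSmean : (Matrix.of fun i j => ∫ ω, S ω i j ∂ℙ) = 1)
    (v : Ω → Fin n → ℝ) (v₀ : Fin n → ℝ)
    (hvmean : ∀ i, ∫ ω, v ω i ∂ℙ = v₀ i)
    (hvint : ∀ i, Integrable (fun ω => v ω i) ℙ)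
    (hSint : ∀ i j, Integrable (fun ω => S ω i j) ℙ)
    (hquadS : Integrable (fun ω => v₀ ⬝ᵥ (S ω *ᵥ v₀)) ℙ)
    (hquadSinv : Integrable (fun ω => v ω ⬝ᵥ ((S ω)⁻¹ *ᵥ v ω)) ℙ) :
    ∫ ω, v ω ⬝ᵥ ((S ω)⁻¹ *ᵥ v ω) ∂ℙ ≥ v₀ ⬝ᵥ v₀ := by
  -- integrability of the linear term
  have hlin : Integrable (fun ω => v₀ ⬝ᵥ v ω) ℙ := by
    simp only [dotProduct]
    exact integrable_finset_sum _ fun i _ => (hvint i).const_mul (v₀ i)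
  have hg : Integrable (fun ω => 2 * (v₀ ⬝ᵥ v ω) - v₀ ⬝ᵥ (S ω *ᵥ v₀)) ℙ :=
    (hlin.const_mul 2).sub hquadS
  -- pointwise a.e. bound
  have hae : ∀ᵐ ω ∂ℙ, 2 * (v₀ ⬝ᵥ v ω) - v₀ ⬝ᵥ (S ω *ᵥ v₀) ≤
      v ω ⬝ᵥ ((S ω)⁻¹ *ᵥ v ω) := by
    filter_upwards [hSpd] with ω hω
    exact pointwise_inv_quadratic_bound hω (v ω) v₀
  have hmono := integral_mono_ae hg hquadSinv hae
  -- compute the integral of the lower bound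
  have hIlin : ∫ ω, v₀ ⬝ᵥ v ω ∂ℙ = v₀ ⬝ᵥ v₀ := by
    simp only [dotProduct]
    rw [integral_finset_sum _ fun i _ => (hvint i).const_mul (v₀ i)]
    refine Finset.sum_congr rfl fun i _ => ?_
    rw [integral_const_mul, hvmean i]
  have hIquad : ∫ ω, v₀ ⬝ᵥ (S ω *ᵥ v₀) ∂ℙ = v₀ ⬝ᵥ v₀ := by
    have : ∀ ω, v₀ ⬝ᵥ (S ω *ᵥ v₀) = ∑ i, ∑ j, v₀ i * (S ω i j * v₀ j) := by
      intro ω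
      simp [dotProduct, Matrix.mulVec, Finset.mul_sum]
    calc ∫ ω, v₀ ⬝ᵥ (S ω *ᵥ v₀) ∂ℙ
        = ∫ ω, ∑ i, ∑ j, v₀ i * (S ω i j * v₀ j) ∂ℙ := by
          simp_rw [this]
      _ = ∑ i, ∑ j, v₀ i * ((∫ ω, S ω i j ∂ℙ) * v₀ j) := by
          rw [integral_finset_sum _ fun i _ => integrable_finset_sum _ fun j _ =>
            (((hSint i j).mul_const (v₀ j)).const_mul (v₀ i))]
          refine Finset.sum_congr rfl fun i _ => ?_
          rw [integral_finset_sum _ fun j _ =>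
            (((hSint i j).mul_const (v₀ j)).const_mul (v₀ i))]
          refine Finset.sum_congr rfl fun j _ => ?_
          rw [show (fun ω => v₀ i * (S ω i j * v₀ j)) =
            (fun ω => v₀ i * v₀ j * S ω i j) by funext ω; ring]
          rw [integral_const_mul]
          ring
      _ = v₀ ⬝ᵥ ((Matrix.of fun i j => ∫ ω, S ω i j ∂ℙ) *ᵥ v₀) := by
          simp [dotProduct, Matrix.mulVec, Finset.mul_sum]
      _ = v₀ ⬝ᵥ v₀ := by rw [hSmean, Matrix.one_mulVec]
  rw [integral_sub (hlin.const_mul 2) hquadS, integral_const_mul, hIlin, hIquad] at hmono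
  linarith
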